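/- (Existence of a coarsely devised LDPC glue code.) Let H_X ∈ 𝔽₂^{r_X×n} and J_{Z,A} ∈ 𝔽₂^{q×n} such that every row of J_{Z,A} lies in ker H_X. Let B_N ⊆ {1,…,n} be the set of columns on which J_{Z,A} has a nonzero entry and n_N = |B_N|. Then there exist a natural number r_G with r_G ≤ w_max(H_X)·n_N and matrices H_G ∈ 𝔽₂^{r_G×n_N}, S ∈ 𝔽₂^{n_N×n}, T ∈ 𝔽₂^{r_X×r_G} such that: H_X Sᵀ = T H_G; every row and every column of S, and of T, has at most one nonzero entry; rs J_{Z,A} ⊆ (ker H_G)·S; and w_max(H_G) ≤ w_max(H_X). -/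

import Mathlib

open Matrix

/-- The row space (𝔽₂-span of the rows) of a matrix. -/
def rowSpan {ι κ : Type*} (A : Matrix ι κ (ZMod 2)) :
    Submodule (ZMod 2) (κ → ZMod 2) :=
  Submodule.span (ZMod 2) (Set.range A)

/-- `w_max A`: the maximum number of nonzero entries in any row or column of `A`. -/
def wmax {r c : ℕ} (A : Matrix (Fin r) (Fin c) (ZMod 2)) : ℕ :=
  max (Finset.univ.sup fun i => (Finset.univ.filter fun j => A i j ≠ 0).card)
    (Finset.univ.sup fun j => (Finset.univ.filter fun i => A i j ≠ 0).card)

lemma row_card_le_wmax {r c : ℕ} (A : Matrix (Fin r) (Fin c) (ZMod 2)) (i : Fin r) :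
    (Finset.univ.filter fun j => A i j ≠ 0).card ≤ wmax A := by
  unfold wmax
  exact (Finset.le_sup (f := fun i => (Finset.univ.filter fun j => A i j ≠ 0).card)
    (Finset.mem_univ i)).trans le_sup_left

lemma col_card_le_wmax {r c : ℕ} (A : Matrix (Fin r) (Fin c) (ZMod 2)) (j : Fin c) :
    (Finset.univ.filter fun i => A i j ≠ 0).card ≤ wmax A := by
  unfold wmax
  exact (Finset.le_sup (f := fun j => (Finset.univ.filter fun i => A i j ≠ 0).card)
    (Finset.mem_univ j)).trans le_sup_right

/-- existence of a coarsely devised LDPC glue code. Here `B_N` is the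
set of columns on which `J_{Z,A}` is supported and `n_N = |B_N|`. -/
theorem exists_coarsely_devised_glue_code {rX n q : ℕ}
    (HX : Matrix (Fin rX) (Fin n) (ZMod 2))
    (JZA : Matrix (Fin q) (Fin n) (ZMod 2))
    (hker : ∀ i : Fin q, HX.mulVec (JZA i) = 0)
    (nN : ℕ)
    (hnN : nN = (Finset.univ.filter fun j : Fin n => ∃ i : Fin q, JZA i j ≠ 0).card) :
    ∃ (rG : ℕ) (HG : Matrix (Fin rG) (Fin nN) (ZMod 2))
      (S : Matrix (Fin nN) (Fin n) (ZMod 2))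
      (T : Matrix (Fin rX) (Fin rG) (ZMod 2)),
      rG ≤ wmax HX * nN ∧
      HX * Sᵀ = T * HG ∧
      (∀ i, (Finset.univ.filter fun j => S i j ≠ 0).card ≤ 1) ∧
      (∀ j, (Finset.univ.filter fun i => S i j ≠ 0).card ≤ 1) ∧
      (∀ i, (Finset.univ.filter fun j => T i j ≠ 0).card ≤ 1) ∧
      (∀ j, (Finset.univ.filter fun i => T i j ≠ 0).card ≤ 1) ∧
      rowSpan JZA ≤ Submodule.map S.vecMulLinear (LinearMap.ker HG.mulVecLin) ∧
      wmax HG ≤ wmax HX := by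
  classical
  set B : Finset (Fin n) := Finset.univ.filter fun j : Fin n => ∃ i : Fin q, JZA i j ≠ 0
    with hB
  have hcard : B.card = nN := hnN.symm
  set f : Fin nN ↪o Fin n := B.orderEmbOfFin hcard with hf
  have hfmem : ∀ j', f j' ∈ B := fun j' => B.orderEmbOfFin_mem hcard j'
  have hfinj : Function.Injective f := f.injective
  have hBzero : ∀ (i : Fin q) (j : Fin n), j ∉ B → JZA i j = 0 := by
    intro i j hj
    by_contra h
    exact hj (by simp [hB]; exact ⟨i, h⟩)
  have himg : Finset.image f Finset.univ = B := by
    apply Finset.eq_of_subset_of_card_le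
    · intro j hj
      obtain ⟨j', _, rfl⟩ := Finset.mem_image.mp hj
      exact hfmem j'
    · rw [Finset.card_image_of_injective _ hfinj, Finset.card_univ, Fintype.card_fin, hcard]
  set R : Finset (Fin rX) := Finset.univ.filter fun i => ∃ j ∈ B, HX i j ≠ 0 with hR
  set g : Fin R.card ↪o Fin rX := R.orderEmbOfFin rfl with hg
  have hgmem : ∀ k, g k ∈ R := fun k => R.orderEmbOfFin_mem rfl k
  have hginj : Function.Injective g := g.injective
  have hgimg : Finset.image g Finset.univ = R := by
    apply Finset.eq_of_subset_of_card_le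
    · intro i hi
      obtain ⟨k, _, rfl⟩ := Finset.mem_image.mp hi
      exact hgmem k
    · rw [Finset.card_image_of_injective _ hginj, Finset.card_univ, Fintype.card_fin]
  refine ⟨R.card, fun k j' => HX (g k) (f j'),
    fun i j => if j = f i then 1 else 0,
    fun i k => if i = g k then 1 else 0, ?_, ?_, ?_, ?_, ?_, ?_, ?_, ?_⟩
  · -- rG ≤ wmax HX * nN
    have hsub : R ⊆ B.biUnion fun j => Finset.univ.filter fun i => HX i j ≠ 0 := by
      intro i hi
      rw [hR, Finset.mem_filter] at hi
      obtain ⟨-, j, hj, hij⟩ := hi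
      exact Finset.mem_biUnion.mpr ⟨j, hj, Finset.mem_filter.mpr ⟨Finset.mem_univ _, hij⟩⟩
    calc R.card ≤ (B.biUnion fun j => Finset.univ.filter fun i => HX i j ≠ 0).card :=
          Finset.card_le_card hsub
      _ ≤ ∑ j ∈ B, (Finset.univ.filter fun i => HX i j ≠ 0).card := Finset.card_biUnion_le
      _ ≤ ∑ _j ∈ B, wmax HX := by
          apply Finset.sum_le_sum
          intro j _
          exact col_card_le_wmax HX j
      _ = wmax HX * nN := by rw [Finset.sum_const, hcard, smul_eq_mul, mul_comm]
  · -- HX * Sᵀ = T * HG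
    ext i j'
    have hlhs : (HX * (fun i j => if j = f i then (1 : ZMod 2) else 0)ᵀ) i j' =
        HX i (f j') := by
      simp [Matrix.mul_apply, Matrix.transpose, mul_ite]
    rw [hlhs]
    show HX i (f j') = ∑ k : Fin R.card, (if i = g k then (1 : ZMod 2) else 0) * HX (g k) (f j')
    by_cases hi : i ∈ R
    · obtain ⟨k0, -, hk0⟩ := Finset.mem_image.mp (hgimg ▸ hi)
      rw [Finset.sum_eq_single k0]
      · rw [hk0]; simp [hk0]
      · intro k _ hk
        have : i ≠ g k := by
          rw [← hk0]; exact fun h => hk (hginj (by rw [← h]))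
        simp [this]
      · intro h; exact absurd (Finset.mem_univ k0) h
    · have h1 : HX i (f j') = 0 := by
        by_contra h
        exact hi (by rw [hR, Finset.mem_filter]; exact ⟨Finset.mem_univ _, f j', hfmem j', h⟩)
      have h2 : ∀ k : Fin R.card, i ≠ g k := by
        intro k h
        exact hi (h ▸ hgmem k)
      rw [h1]
      symm
      apply Finset.sum_eq_zero
      intro k _
      simp [h2 k]
  · -- rows of S
    intro i
    apply Finset.card_le_one.mpr
    intro a ha b hb
    simp only [Finset.mem_filter, ne_eq, ite_eq_right_iff, not_forall] at ha hb
    rw [ha.2.1, hb.2.1]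
  · -- columns of S
    intro j
    apply Finset.card_le_one.mpr
    intro a ha b hb
    simp only [Finset.mem_filter, ne_eq, ite_eq_right_iff, not_forall] at ha hb
    exact hfinj (ha.2.1 ▸ hb.2.1 ▸ rfl)
  · -- rows of T
    intro i
    apply Finset.card_le_one.mpr
    intro a ha b hb
    simp only [Finset.mem_filter, ne_eq, ite_eq_right_iff, not_forall] at ha hb
    exact hginj (ha.2.1 ▸ hb.2.1 ▸ rfl)
  · -- columns of T
    intro k
    apply Finset.card_le_one.mpr
    intro a ha b hb
    simp only [Finset.mem_filter, ne_eq, ite_eq_right_iff, not_forall] at ha hb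
    rw [ha.2.1, hb.2.1]
  · -- kernel condition
    rw [rowSpan, Submodule.span_le]
    rintro _ ⟨i, rfl⟩
    refine Submodule.mem_map.mpr ⟨fun j' => JZA i (f j'), ?_, ?_⟩
    · rw [LinearMap.mem_ker]
      funext k
      have hsum : ∑ j' : Fin nN, HX (g k) (f j') * JZA i (f j')
          = ∑ j : Fin n, HX (g k) j * JZA i j := by
        rw [show (∑ j : Fin n, HX (g k) j * JZA i j) = ∑ j ∈ B, HX (g k) j * JZA i j from
            (Finset.sum_subset (Finset.subset_univ B)
              (fun j _ hj => by rw [hBzero i j hj, mul_zero])).symm,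
          ← himg, Finset.sum_image (fun a _ b _ h => hfinj h)]
      have := congrFun (hker i) (g k)
      simp only [Matrix.mulVec, dotProduct] at this
      show ∑ j' : Fin nN, HX (g k) (f j') * JZA i (f j') = 0
      rw [hsum]; exact this
    · funext j
      show ∑ j' : Fin nN, JZA i (f j') * (if j = f j' then (1 : ZMod 2) else 0) = JZA i j
      by_cases hj : j ∈ B
      · obtain ⟨j0, -, hj0⟩ := Finset.mem_image.mp (himg ▸ hj)
        rw [Finset.sum_eq_single j0]
        · rw [hj0]; simp [hj0]
        · intro j' _ hj'
          have : j ≠ f j' := by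
            rw [← hj0]; exact fun h => hj' (hfinj (by rw [← h]))
          simp [this]
        · intro h; exact absurd (Finset.mem_univ j0) h
      · rw [hBzero i j hj]
        apply Finset.sum_eq_zero
        intro j' _
        have : j ≠ f j' := fun h => hj (h ▸ hfmem j')
        simp [this]
  · -- wmax bound
    apply max_le
    · apply Finset.sup_le
      intro k _
      have : (Finset.univ.filter fun j' => HX (g k) (f j') ≠ 0).card ≤
          (Finset.univ.filter fun j => HX (g k) j ≠ 0).card := by
        apply Finset.card_le_card_of_injOn (fun j' => f j')
        · intro j' hj'
          simp only [Finset.mem_coe, Finset.mem_filter] at hj' ⊢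
          exact ⟨Finset.mem_univ _, hj'.2⟩
        · intro a _ b _ h
          exact hfinj h
      exact le_trans this (row_card_le_wmax HX (g k))
    · apply Finset.sup_le
      intro j' _
      have : (Finset.univ.filter fun k => HX (g k) (f j') ≠ 0).card ≤
          (Finset.univ.filter fun i => HX i (f j') ≠ 0).card := by
        apply Finset.card_le_card_of_injOn (fun k => g k)
        · intro k hk
          simp only [Finset.mem_coe, Finset.mem_filter] at hk ⊢
          exact ⟨Finset.mem_univ _, hk.2⟩
        · intro a _ b _ h
          exact hginj h
      exact le_trans this (col_card_le_wmax HX (f j'))
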